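/- Consider the mean-field Ising model π(x) = exp(β S_N(x)²/(2N))/Z_N on X = {−1,1}^N with N even, and the Metropolis chain M with the equi-energy proposal K of equation (proposal) with parameters p₁, p₂ ∈ (0,1), p₁ + p₂ < 1. Let \bar P be the projected chain on energy levels {0,2,...,N} defined by \bar P(i,j) = (1/(2π(X_i))) Σ_{x∈X_i, y∈X_j} M(x,y)π(x) for i ≠ j, where X_i = {x : |S_N(x)| = i}. Then \bar P is a birth and death chain with \bar P(0,2) = p₁/2, \bar P(i,i+2) = (p₁/4)(N−i)/N for 0 < i < N, and \bar P(i,i−2) = (p₁/4)((N+i)/N)·exp(2β(1−i)/N) for i ≠ 0. -/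

import Mathlib

open Finset

/-- Total spin `S_N(x) = ∑ x_i` of a configuration `x ∈ {-1,1}^N` (encoded by `Bool`). -/
def SN (N : ℕ) (x : Fin N → Bool) : ℤ := ∑ i, (if x i then 1 else -1)

/-- Gibbs weight `exp(β S_N(x)²/(2N))` of the mean-field Ising model. -/
noncomputable def isingW (N : ℕ) (β : ℝ) (x : Fin N → Bool) : ℝ :=
  Real.exp (β * ((SN N x : ℝ)) ^ 2 / (2 * N))

/-- The mean-field Ising Gibbs measure `π(x) = exp(β S_N(x)²/(2N))/Z_N`. -/
noncomputable def isingPi (N : ℕ) (β : ℝ) (x : Fin N → Bool) : ℝ :=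
  isingW N β x / ∑ y, isingW N β y

/-- Unsigned energy level `X_i = {x : |S_N(x)| = i}`. -/
def isingLevel (N i : ℕ) : Finset (Fin N → Bool) :=
  Finset.univ.filter fun x => (SN N x).natAbs = i

/-- Signed level `X_s = {x : S_N(x) = s}`. -/
def isingLevelS (N : ℕ) (s : ℤ) : Finset (Fin N → Bool) :=
  Finset.univ.filter fun x => SN N x = s

/-- Flip of the `j`-th spin. -/
def isingFlip (N : ℕ) (x : Fin N → Bool) (j : Fin N) : Fin N → Bool :=
  Function.update x j (!x j)

/-- Global spin reversal `x ↦ -x`. -/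
def isingNeg (N : ℕ) (x : Fin N → Bool) : Fin N → Bool := fun i => !x i

/-- The equi-energy proposal `K` of equation (proposal): with prob. `p₁` flip a uniform
coordinate; on `X_0`, with prob. `1-p₁` sample uniformly in `X_0`; on `X_i` (`i ≠ 0`),
with prob. `p₂` jump to `-x` and with prob. `1-p₁-p₂` sample uniformly in `X_i^±`. -/
noncomputable def isingK (N : ℕ) (p₁ p₂ : ℝ) (x y : Fin N → Bool) : ℝ :=
  p₁ * (1 / (N : ℝ)) * ∑ j, (if y = isingFlip N x j then (1 : ℝ) else 0) +
  if SN N x = 0 then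
    (1 - p₁) * (if SN N y = 0 then 1 / ((isingLevel N 0).card : ℝ) else 0)
  else
    p₂ * (if y = isingNeg N x then 1 else 0) +
    (1 - p₁ - p₂) *
      (if SN N y = SN N x then 1 / ((isingLevelS N (SN N x)).card : ℝ) else 0)

/-- The Metropolis chain `M` with symmetric proposal `isingK` and target `isingPi`. -/
noncomputable def isingM (N : ℕ) (β p₁ p₂ : ℝ) (x y : Fin N → Bool) : ℝ :=
  if y = x then
    1 - ∑ z ∈ Finset.univ.erase x,
      isingK N p₁ p₂ x z * min 1 (isingPi N β z / isingPi N β x)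
  else isingK N p₁ p₂ x y * min 1 (isingPi N β y / isingPi N β x)

/-- The projected chain on energy levels:
`\bar P(i,j) = (1/(2π(X_i))) ∑_{x∈X_i} ∑_{y∈X_j} M(x,y) π(x)` (for `i ≠ j`). -/
noncomputable def isingBar (N : ℕ) (β p₁ p₂ : ℝ) (i j : ℕ) : ℝ :=
  (1 / (2 * ∑ x ∈ isingLevel N i, isingPi N β x)) *
    ∑ x ∈ isingLevel N i, ∑ y ∈ isingLevel N j, isingM N β p₁ p₂ x y * isingPi N β x

/-! ### Auxiliary lemmas -/

lemma SN_eq_card (N : ℕ) (x : Fin N → Bool) :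
    SN N x = 2 * ((univ.filter (fun k => x k = true)).card : ℤ) - N := by
  unfold SN
  have h : ∀ k : Fin N, (if x k then (1:ℤ) else -1) = (if x k = true then (2:ℤ) else 0) - 1 := by
    intro k; by_cases h : x k <;> simp [h]
  rw [Finset.sum_congr rfl (fun k _ => h k), Finset.sum_sub_distrib, ← Finset.sum_filter]
  simp [mul_comm]

lemma SN_neg' (N : ℕ) (x : Fin N → Bool) : SN N (isingNeg N x) = - SN N x := by
  unfold SN isingNeg
  rw [← Finset.sum_neg_distrib]
  refine Finset.sum_congr rfl fun k _ => ?_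
  by_cases h : x k <;> simp [h]

lemma SN_flip (N : ℕ) (x : Fin N → Bool) (j : Fin N) :
    SN N (isingFlip N x j) = SN N x + (if x j then -2 else 2) := by
  unfold SN isingFlip
  have key : ∀ i : Fin N, (if (Function.update x j (!x j) i) then (1:ℤ) else -1)
      = (if x i then 1 else -1) + (if i = j then (if x j then -2 else 2) else 0) := by
    intro i
    rcases eq_or_ne i j with rfl | h
    · by_cases hx : x i <;> simp [hx]
    · simp [Function.update_of_ne h, h]
  rw [Finset.sum_congr rfl (fun i _ => key i), Finset.sum_add_distrib,
    Finset.sum_ite_eq' univ j]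
  simp

lemma card_filter_val_lt (N m : ℕ) (h : m ≤ N) :
    ((univ : Finset (Fin N)).filter (fun k : Fin N => (k:ℕ) < m)).card = m := by
  have e : ((univ : Finset (Fin N)).filter (fun k : Fin N => (k:ℕ) < m)).card
      = (Finset.range m).card := by
    refine Finset.card_bij' (fun (k : Fin N) _ => (k : ℕ))
        (fun a ha => (⟨a, lt_of_lt_of_le (Finset.mem_range.mp ha) h⟩ : Fin N)) ?_ ?_ ?_ ?_
    · intro a ha; simp at ha ⊢; exact ha
    · intro a ha; simp at ha ⊢; exact ha
    · intro a ha; simp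
    · intro a ha; simp
  rw [e, Finset.card_range]

lemma card_true_false (N : ℕ) (x : Fin N → Bool) :
    (univ.filter (fun k => x k = true)).card + (univ.filter (fun k => x k = false)).card = N := by
  have h := Finset.card_filter_add_card_filter_not (s := (univ : Finset (Fin N)))
    (p := fun k => x k = true)
  simpa using h

lemma cast_sq_of_natAbs (a : ℤ) (j : ℕ) (h : a.natAbs = j) : ((a:ℝ))^2 = ((j:ℝ))^2 := by
  have h2 : a^2 = (j:ℤ)^2 := by rw [← Int.natAbs_sq a, h]
  exact_mod_cast congrArg (fun t : ℤ => (t:ℝ)) h2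

lemma level_le (N i : ℕ) (x : Fin N → Bool) (hx : x ∈ isingLevel N i) : i ≤ N := by
  have hxi : (SN N x).natAbs = i := (Finset.mem_filter.mp hx).2
  have h := SN_eq_card N x
  have hT : (univ.filter (fun k => x k = true)).card ≤ N := by
    calc (univ.filter (fun k => x k = true)).card ≤ (univ : Finset (Fin N)).card :=
          Finset.card_filter_le _ _
      _ = N := by simp
  omega

lemma level_nonempty (N i : ℕ) (hNe : Even N) (hie : Even i) (h : i ≤ N) :
    (isingLevel N i).Nonempty := by
  obtain ⟨a, ha⟩ := hNe
  obtain ⟨b, hb⟩ := hie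
  have h2 : 2 * ((N + i) / 2) = N + i := by omega
  refine ⟨fun k => decide ((k:ℕ) < (N+i)/2), ?_⟩
  have hfc : (univ.filter (fun k : Fin N => (fun k : Fin N => decide ((k:ℕ) < (N+i)/2)) k = true))
      = (univ.filter (fun k : Fin N => (k:ℕ) < (N+i)/2)) := by
    apply Finset.filter_congr; intro k _; simp
  have hcard : (univ.filter (fun k : Fin N =>
      (fun k : Fin N => decide ((k:ℕ) < (N+i)/2)) k = true)).card = (N+i)/2 := by
    rw [hfc, card_filter_val_lt N ((N+i)/2) (by omega)]
  have hS := SN_eq_card N (fun k => decide ((k:ℕ) < (N+i)/2))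
  rw [hcard] at hS
  have hSi : SN N (fun k => decide ((k:ℕ) < (N+i)/2)) = (i:ℤ) := by rw [hS]; omega
  simp [isingLevel, hSi]

lemma Z_pos (N : ℕ) (β : ℝ) : 0 < ∑ y : Fin N → Bool, isingW N β y :=
  Finset.sum_pos (fun y _ => Real.exp_pos _) Finset.univ_nonempty

lemma isingPi_pos (N : ℕ) (β : ℝ) (x : Fin N → Bool) : 0 < isingPi N β x :=
  div_pos (Real.exp_pos _) (Z_pos N β)

lemma pi_ratio (N : ℕ) (β : ℝ) (i j : ℕ) (x y : Fin N → Bool)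
    (hx : (SN N x).natAbs = i) (hy : (SN N y).natAbs = j) :
    isingPi N β y / isingPi N β x
      = Real.exp (β * ((j:ℝ)^2 - (i:ℝ)^2) / (2*(N:ℝ))) := by
  unfold isingPi
  rw [div_div_div_cancel_right₀]
  · unfold isingW
    rw [← Real.exp_sub]
    congr 1
    rw [cast_sq_of_natAbs _ _ hx, cast_sq_of_natAbs _ _ hy]
    ring
  · exact (Z_pos N β).ne'

lemma sum_M (N : ℕ) (β p₁ p₂ : ℝ) (i j : ℕ) (hij : j ≠ i) (x : Fin N → Bool)
    (hx : x ∈ isingLevel N i) :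
    ∑ y ∈ isingLevel N j, isingM N β p₁ p₂ x y
      = min 1 (Real.exp (β * ((j:ℝ)^2 - (i:ℝ)^2) / (2*(N:ℝ)))) *
        (p₁ * (1/(N:ℝ)) *
          (((univ.filter (fun k : Fin N =>
            (SN N x + if x k then -2 else 2).natAbs = j)).card : ℝ))) := by
  have hxi : (SN N x).natAbs = i := (Finset.mem_filter.mp hx).2
  have step1 : ∀ y ∈ isingLevel N j, isingM N β p₁ p₂ x y
      = (p₁ * (1/(N:ℝ)) * ∑ k, (if y = isingFlip N x k then (1:ℝ) else 0)) *
        min 1 (Real.exp (β * ((j:ℝ)^2 - (i:ℝ)^2) / (2*(N:ℝ)))) := by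
    intro y hy
    have hyj : (SN N y).natAbs = j := (Finset.mem_filter.mp hy).2
    have hne : y ≠ x := by intro h; apply hij; rw [h] at hyj; omega
    unfold isingM
    rw [if_neg hne]
    have hK : isingK N p₁ p₂ x y
        = p₁ * (1/(N:ℝ)) * ∑ k, (if y = isingFlip N x k then (1:ℝ) else 0) := by
      unfold isingK
      rcases eq_or_ne (SN N x) 0 with h0 | h0
      · rw [if_pos h0]
        have hy0 : SN N y ≠ 0 := by
          intro h; apply hij; rw [h] at hyj; rw [h0] at hxi; simp at hyj hxi; omega
        rw [if_neg hy0]; ring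
      · rw [if_neg h0]
        have h1 : y ≠ isingNeg N x := by
          intro h; apply hij
          rw [h, SN_neg' N x, Int.natAbs_neg] at hyj; omega
        have h2 : SN N y ≠ SN N x := by
          intro h; apply hij; rw [h] at hyj; omega
        rw [if_neg h1, if_neg h2]; ring
    rw [hK, pi_ratio N β i j x y hxi hyj]
  rw [Finset.sum_congr rfl step1, ← Finset.sum_mul, mul_comm]
  congr 1
  rw [← Finset.mul_sum]
  congr 1
  rw [Finset.sum_comm]
  have inner : ∀ k : Fin N, (∑ y ∈ isingLevel N j, if y = isingFlip N x k then (1:ℝ) else 0)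
      = if (SN N x + if x k then -2 else 2).natAbs = j then (1:ℝ) else 0 := by
    intro k
    rw [Finset.sum_ite_eq' (isingLevel N j) (isingFlip N x k) (fun _ => (1:ℝ))]
    by_cases hm : isingFlip N x k ∈ isingLevel N j
    · rw [if_pos hm, if_pos]
      have h2 := (Finset.mem_filter.mp hm).2
      rw [SN_flip] at h2
      exact h2
    · rw [if_neg hm, if_neg]
      intro hc
      apply hm
      unfold isingLevel
      rw [Finset.mem_filter, SN_flip]
      exact ⟨Finset.mem_univ _, hc⟩
  rw [Finset.sum_congr rfl (fun k _ => inner k)]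
  simp [Finset.sum_boole]

lemma bar_eq (N : ℕ) (hN : 0 < N) (β p₁ p₂ : ℝ) (i j D : ℕ) (hij : j ≠ i)
    (hne : (isingLevel N i).Nonempty)
    (hD : ∀ x ∈ isingLevel N i,
        2 * ((univ.filter (fun k : Fin N =>
          (SN N x + if x k then -2 else 2).natAbs = j)).card) = D) :
    isingBar N β p₁ p₂ i j
      = min 1 (Real.exp (β * ((j:ℝ)^2 - (i:ℝ)^2) / (2*(N:ℝ)))) * (p₁ * (D:ℝ)) / (4*(N:ℝ)) := by
  unfold isingBar
  set mv := min 1 (Real.exp (β * ((j:ℝ)^2 - (i:ℝ)^2) / (2*(N:ℝ)))) with hmv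
  have hPi : 0 < ∑ x ∈ isingLevel N i, isingPi N β x :=
    Finset.sum_pos (fun x _ => isingPi_pos N β x) hne
  have inner : ∀ x ∈ isingLevel N i,
      ∑ y ∈ isingLevel N j, isingM N β p₁ p₂ x y * isingPi N β x
        = (mv * (p₁ * (1/(N:ℝ)) * ((D:ℝ)/2))) * isingPi N β x := by
    intro x hx
    rw [← Finset.sum_mul, sum_M N β p₁ p₂ i j hij x hx]
    have hc : (((univ.filter (fun k : Fin N =>
        (SN N x + if x k then -2 else 2).natAbs = j)).card : ℝ)) = (D:ℝ)/2 := by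
      have h := hD x hx
      have : ((2 * ((univ.filter (fun k : Fin N =>
          (SN N x + if x k then -2 else 2).natAbs = j)).card) : ℕ) : ℝ) = (D:ℝ) := by
        exact_mod_cast congrArg (fun t : ℕ => (t:ℝ)) h
      push_cast at this
      linarith
    rw [hc]
  rw [Finset.sum_congr rfl inner, ← Finset.mul_sum]
  have hPi' : (∑ x ∈ isingLevel N i, isingPi N β x) ≠ 0 := hPi.ne'
  have hN' : (N:ℝ) ≠ 0 := Nat.cast_ne_zero.mpr hN.ne'
  field_simp
  ring

lemma count_up (N i : ℕ) (hi : 0 < i) (x : Fin N → Bool) (hx : (SN N x).natAbs = i) :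
    2 * ((univ.filter (fun k : Fin N =>
      (SN N x + if x k then -2 else 2).natAbs = i + 2)).card) = N - i := by
  have hS := SN_eq_card N x
  set T := (univ.filter (fun k => x k = true)).card with hT
  have hTF := card_true_false N x
  rcases Int.natAbs_eq (SN N x) with hs | hs <;> rw [hx] at hs
  · -- SN N x = i : condition ↔ x k = false
    have hcond : (univ.filter (fun k : Fin N =>
        (SN N x + if x k then -2 else 2).natAbs = i + 2))
        = (univ.filter (fun k => x k = false)) := by
      apply Finset.filter_congr; intro k _
      by_cases h : x k = true
      · rw [if_pos h, hs]
        exact ⟨fun hc => absurd hc (by omega), fun hc => by simp [h] at hc⟩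
      · have h' : x k = false := by
          cases hxk : x k
          · rfl
          · exact absurd hxk h
        rw [if_neg h, hs, h']
        exact ⟨fun _ => rfl, fun _ => by omega⟩
    rw [hcond]
    omega
  · -- SN N x = -i : condition ↔ x k = true
    have hcond : (univ.filter (fun k : Fin N =>
        (SN N x + if x k then -2 else 2).natAbs = i + 2))
        = (univ.filter (fun k => x k = true)) := by
      apply Finset.filter_congr; intro k _
      by_cases h : x k = true
      · rw [if_pos h, hs, h]
        exact ⟨fun _ => rfl, fun _ => by omega⟩
      · rw [if_neg h, hs]
        exact ⟨fun hc => absurd hc (by omega), fun hc => absurd hc h⟩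
    rw [hcond]
    omega

lemma count_down (N i : ℕ) (hi : 2 ≤ i) (x : Fin N → Bool) (hx : (SN N x).natAbs = i) :
    2 * ((univ.filter (fun k : Fin N =>
      (SN N x + if x k then -2 else 2).natAbs = i - 2)).card) = N + i := by
  have hS := SN_eq_card N x
  set T := (univ.filter (fun k => x k = true)).card with hT
  have hTF := card_true_false N x
  rcases Int.natAbs_eq (SN N x) with hs | hs <;> rw [hx] at hs
  · -- SN N x = i : condition ↔ x k = true
    have hcond : (univ.filter (fun k : Fin N =>
        (SN N x + if x k then -2 else 2).natAbs = i - 2))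
        = (univ.filter (fun k => x k = true)) := by
      apply Finset.filter_congr; intro k _
      by_cases h : x k = true
      · rw [if_pos h, hs, h]
        exact ⟨fun _ => rfl, fun _ => by omega⟩
      · rw [if_neg h, hs]
        exact ⟨fun hc => absurd hc (by omega), fun hc => absurd hc h⟩
    rw [hcond]
    omega
  · -- SN N x = -i : condition ↔ x k = false
    have hcond : (univ.filter (fun k : Fin N =>
        (SN N x + if x k then -2 else 2).natAbs = i - 2))
        = (univ.filter (fun k => x k = false)) := by
      apply Finset.filter_congr; intro k _
      by_cases h : x k = true
      · rw [if_pos h, hs]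
        exact ⟨fun hc => absurd hc (by omega), fun hc => by simp [h] at hc⟩
      · have h' : x k = false := by
          cases hxk : x k
          · rfl
          · exact absurd hxk h
        rw [if_neg h, hs, h']
        exact ⟨fun _ => rfl, fun _ => by omega⟩
    rw [hcond]
    omega

theorem ising_projected_chain (N : ℕ) (hN : 2 ≤ N) (hNe : Even N)
    (β p₁ p₂ : ℝ) (hβ : 0 < β) (hp₁ : p₁ ∈ Set.Ioo (0 : ℝ) 1)
    (hp₂ : p₂ ∈ Set.Ioo (0 : ℝ) 1) (hps : p₁ + p₂ < 1) :
    isingBar N β p₁ p₂ 0 2 = p₁ / 2 ∧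
    (∀ i : ℕ, Even i → 0 < i → i < N →
      isingBar N β p₁ p₂ i (i + 2) = (p₁ / 4) * (((N : ℝ) - i) / N)) ∧
    (∀ i : ℕ, Even i → 0 < i → i ≤ N →
      isingBar N β p₁ p₂ i (i - 2)
        = (p₁ / 4) * (((N : ℝ) + i) / N) * Real.exp (2 * β * (1 - (i : ℝ)) / N)) ∧
    (∀ i j : ℕ, Even i → Even j → i ≤ N → j ≤ N → j ≠ i → j ≠ i + 2 → i ≠ j + 2 →
      isingBar N β p₁ p₂ i j = 0) := by
  have hN0 : 0 < N := by omega
  have hN' : (N:ℝ) ≠ 0 := Nat.cast_ne_zero.mpr hN0.ne'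
  have hNR : (0:ℝ) < N := by positivity
  refine ⟨?_, ?_, ?_, ?_⟩
  · -- P(0,2) = p₁/2
    have hne := level_nonempty N 0 hNe (Even.zero) (Nat.zero_le N)
    have hD : ∀ x ∈ isingLevel N 0,
        2 * ((univ.filter (fun k : Fin N =>
          (SN N x + if x k then -2 else 2).natAbs = 2)).card) = 2 * N := by
      intro x hx
      have hx0 : (SN N x).natAbs = 0 := (Finset.mem_filter.mp hx).2
      have : (univ.filter (fun k : Fin N =>
          (SN N x + if x k then -2 else 2).natAbs = 2)) = univ := by
        rw [Finset.filter_eq_self]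
        intro k _
        have hs0 : SN N x = 0 := by omega
        by_cases h : x k = true
        · rw [if_pos h, hs0]; rfl
        · rw [if_neg h, hs0]; rfl
      rw [this]
      simp [Fintype.card_fin]
    rw [bar_eq N hN0 β p₁ p₂ 0 2 (2*N) (by omega) hne hD]
    have hmv : min 1 (Real.exp (β * (((2:ℕ):ℝ)^2 - ((0:ℕ):ℝ)^2) / (2*(N:ℝ)))) = 1 := by
      apply min_eq_left
      rw [Real.one_le_exp_iff]
      positivity
    rw [hmv]
    push_cast
    field_simp
    ring
  · -- P(i,i+2)
    intro i hie hi0 hiN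
    have hne := level_nonempty N i hNe hie (le_of_lt hiN)
    have hD : ∀ x ∈ isingLevel N i,
        2 * ((univ.filter (fun k : Fin N =>
          (SN N x + if x k then -2 else 2).natAbs = i + 2)).card) = N - i := by
      intro x hx
      exact count_up N i hi0 x (Finset.mem_filter.mp hx).2
    rw [bar_eq N hN0 β p₁ p₂ i (i+2) (N-i) (by omega) hne hD]
    have hmv : min 1 (Real.exp (β * (((i+2:ℕ):ℝ)^2 - ((i:ℕ):ℝ)^2) / (2*(N:ℝ)))) = 1 := by
      apply min_eq_left
      rw [Real.one_le_exp_iff]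
      have h1 : (((i+2:ℕ):ℝ))^2 - ((i:ℕ):ℝ)^2 = 4*(i:ℝ) + 4 := by push_cast; ring
      rw [h1]
      positivity
    rw [hmv]
    have hcast : ((N - i : ℕ) : ℝ) = (N:ℝ) - (i:ℝ) := by
      rw [Nat.cast_sub (le_of_lt hiN)]
    rw [hcast]
    field_simp
  · -- P(i,i-2)
    intro i hie hi0 hiN
    have hi2 : 2 ≤ i := by rcases hie with ⟨k, hk⟩; omega
    have hne := level_nonempty N i hNe hie hiN
    have hD : ∀ x ∈ isingLevel N i,
        2 * ((univ.filter (fun k : Fin N =>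
          (SN N x + if x k then -2 else 2).natAbs = i - 2)).card) = N + i := by
      intro x hx
      exact count_down N i hi2 x (Finset.mem_filter.mp hx).2
    rw [bar_eq N hN0 β p₁ p₂ i (i-2) (N+i) (by omega) hne hD]
    have hc2 : ((i - 2 : ℕ) : ℝ) = (i:ℝ) - 2 := by rw [Nat.cast_sub hi2]; push_cast; ring
    have harg : β * (((i-2:ℕ):ℝ)^2 - ((i:ℕ):ℝ)^2) / (2*(N:ℝ))
        = 2 * β * (1 - (i : ℝ)) / N := by
      rw [hc2]
      field_simp
      ring
    rw [harg]
    have hmv : min 1 (Real.exp (2 * β * (1 - (i : ℝ)) / N))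
        = Real.exp (2 * β * (1 - (i : ℝ)) / N) := by
      apply min_eq_right
      rw [Real.exp_le_one_iff]
      have hi1 : (1:ℝ) ≤ (i:ℝ) := by exact_mod_cast hi0
      have : 2 * β * (1 - (i:ℝ)) ≤ 0 := by nlinarith
      exact div_nonpos_of_nonpos_of_nonneg this (le_of_lt hNR)
    rw [hmv]
    push_cast
    field_simp
  · -- zero off-diagonal
    intro i j hie hje hiN hjN hji hj1 hj2
    have hne := level_nonempty N i hNe hie hiN
    have hD : ∀ x ∈ isingLevel N i,
        2 * ((univ.filter (fun k : Fin N =>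
          (SN N x + if x k then -2 else 2).natAbs = j)).card) = 0 := by
      intro x hx
      have hxi : (SN N x).natAbs = i := (Finset.mem_filter.mp hx).2
      have : (univ.filter (fun k : Fin N =>
          (SN N x + if x k then -2 else 2).natAbs = j)) = ∅ := by
        rw [Finset.filter_eq_empty_iff]
        intro k _
        by_cases h : x k = true
        · rw [if_pos h]; omega
        · rw [if_neg h]; omega
      rw [this]
      simp
    rw [bar_eq N hN0 β p₁ p₂ i j 0 hji hne hD]
    simp
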